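/- Let n ≥ 1 and for 1 ≤ k define I_k(A,B) = (1/k) tr(A^k) and J_k(A,B) = tr(A^{k−1} B) on Mat_n(ℝ) × Mat_n(ℝ). Then for all k, l ≥ 1: {I_k, I_l}_0 = 0; {J_l, I_k}_0 = (k+l−2) I_{k+l−2} whenever k+l ≥ 3, while {J_1, I_1}_0 = n; and {J_k, J_l}_0 = (l−k) J_{k+l−2} whenever k+l ≥ 3 (and {J_1,J_1}_0 = 0). All identities hold pointwise on Mat_n(ℝ) × Mat_n(ℝ). -/

import Mathlib

/- STATEMENT 7: for I_k(A,B) = (1/k) tr(A^k) and J_k(A,B) = tr(A^{k−1} B) one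
has, with respect to the first bracket {F,G}_0(A,B) = tr(η_F ξ_G − ξ_F η_G):
{I_k,I_l}_0 = 0; {J_l,I_k}_0 = (k+l−2) I_{k+l−2} whenever k+l ≥ 3, while
{J_1,I_1}_0 = n; {J_k,J_l}_0 = (l−k) J_{k+l−2} whenever k+l ≥ 3, and
{J_1,J_1}_0 = 0; pointwise on Mat_n(ℝ) × Mat_n(ℝ). -/

attribute [local instance] Matrix.frobeniusNormedAddCommGroup Matrix.frobeniusNormedSpace
attribute [local instance] Matrix.frobeniusNormedRing Matrix.frobeniusNormedAlgebra

/-- The space of real n×n matrices. -/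
abbrev Mat (n : ℕ) := Matrix (Fin n) (Fin n) ℝ

/-- The first component ξ_F of the gradient of F : Mat_n × Mat_n → ℝ,
characterized by dF_{(A,B)}(V,W) = tr(ξ_F V) + tr(η_F W); encoded via the
Fréchet derivative as (ξ_F)_{ij} = dF(E_{ji}, 0), since tr(ξ E_{ji}) = ξ_{ij}. -/
noncomputable def gradA {n : ℕ} (F : Mat n × Mat n → ℝ) (p : Mat n × Mat n) : Mat n :=
  Matrix.of fun i j => fderiv ℝ F p (Matrix.single j i 1, 0)

/-- The second component η_F of the gradient of F : Mat_n × Mat_n → ℝ. -/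
noncomputable def gradB {n : ℕ} (F : Mat n × Mat n → ℝ) (p : Mat n × Mat n) : Mat n :=
  Matrix.of fun i j => fderiv ℝ F p (0, Matrix.single j i 1)

/-- The first Poisson (canonical) bracket {F,G}_0(A,B) = tr(η_F ξ_G − ξ_F η_G). -/
noncomputable def bracket0 {n : ℕ} (F G : Mat n × Mat n → ℝ) (p : Mat n × Mat n) : ℝ :=
  Matrix.trace (gradB F p * gradA G p - gradA F p * gradB G p)

/-- I_k(A,B) = (1/k) tr(A^k). -/
noncomputable def Ifun (n k : ℕ) : Mat n × Mat n → ℝ :=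
  fun p => (1 / (k : ℝ)) * Matrix.trace (p.1 ^ k)

/-- J_k(A,B) = tr(A^{k−1} B). -/
noncomputable def Jfun (n k : ℕ) : Mat n × Mat n → ℝ :=
  fun p => Matrix.trace (p.1 ^ (k - 1) * p.2)

open Matrix Finset

variable {n : ℕ}

/-- The continuous linear map `V ↦ C * V * D`. -/
noncomputable def lrCLM (C D : Mat n) : Mat n →L[ℝ] Mat n :=
  (ContinuousLinearMap.mul ℝ (Mat n) C).comp ((ContinuousLinearMap.mul ℝ (Mat n)).flip D)

@[simp] lemma lrCLM_apply (C D V : Mat n) : lrCLM C D V = C * V * D := by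
  simp [lrCLM, mul_assoc]
  rfl

/-- Candidate derivative of `X ↦ X ^ k`. -/
noncomputable def powDeriv (k : ℕ) (A : Mat n) : Mat n →L[ℝ] Mat n :=
  ∑ i ∈ Finset.range k, lrCLM (A ^ i) (A ^ (k - 1 - i))

lemma hasFDerivAt_matpow (k : ℕ) (A : Mat n) :
    HasFDerivAt (fun X : Mat n => X ^ k) (powDeriv k A) A := by
  induction k with
  | zero =>
      simpa [powDeriv] using (hasFDerivAt_const (1 : Mat n) A)
  | succ k ih =>
      have h := ih.mul' (hasFDerivAt_id A)
      simp only [id_eq] at h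
      have : (fun X : Mat n => X ^ k * X) = fun X : Mat n => X ^ (k + 1) := by
        funext X; rw [pow_succ]
      rw [show ((fun X : Mat n => X ^ k) * id) = fun X : Mat n => X ^ (k + 1) from
        funext fun X => (pow_succ X k).symm] at h
      refine h.congr_fderiv ?_
      refine ContinuousLinearMap.ext fun V => ?_
      have e1 : powDeriv (k + 1) A V = ∑ s ∈ Finset.range (k + 1), A ^ s * V * A ^ (k + 1 - 1 - s) := by
        simp [powDeriv]
      have e2 : powDeriv k A V = ∑ s ∈ Finset.range k, A ^ s * V * A ^ (k - 1 - s) := by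
        simp [powDeriv]
      have e3 : (A ^ k • ContinuousLinearMap.id ℝ (Mat n) + MulOpposite.op A • powDeriv k A) V
          = A ^ k * V + powDeriv k A V * A := rfl
      erw [e1, e3, e2]
      simp only [powDeriv, ContinuousLinearMap.sum_apply, lrCLM_apply,
        ContinuousLinearMap.add_apply, ContinuousLinearMap.smul_apply,
        ContinuousLinearMap.smulRight_apply, ContinuousLinearMap.coe_id', id_eq,
        smul_eq_mul, Finset.sum_range_succ, Nat.add_sub_cancel, op_smul_eq_mul]
      symm
      rw [Finset.sum_mul]
      have h1 : ∀ i ∈ Finset.range k, A ^ i * V * A ^ (k - i) = A ^ i * V * A ^ (k - 1 - i) * A := by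
        intro i hi
        rw [Finset.mem_range] at hi
        rw [mul_assoc (A ^ i * V), ← pow_succ]
        congr 2
        omega
      rw [Finset.sum_congr rfl h1, Nat.sub_self, pow_zero, mul_one]
      exact add_comm _ _

/-- Trace as a continuous linear map. -/
noncomputable def traceCLM : Mat n →L[ℝ] ℝ :=
  LinearMap.toContinuousLinearMap (Matrix.traceLinearMap (Fin n) ℝ ℝ)

@[simp] lemma traceCLM_apply (C : Mat n) : traceCLM C = Matrix.trace C := rfl

lemma trace_mul_std (C : Mat n) (i j : Fin n) :
    Matrix.trace (C * Matrix.single j i 1) = C i j := by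
  simp [Matrix.trace, Matrix.diag, Matrix.mul_apply, Matrix.single, ite_and]

lemma powDeriv_apply (k : ℕ) (A V : Mat n) :
    powDeriv k A V = ∑ s ∈ Finset.range k, A ^ s * V * A ^ (k - 1 - s) := by
  simp [powDeriv]

lemma trace_powDeriv_std (k : ℕ) (A : Mat n) (i j : Fin n) :
    Matrix.trace (powDeriv k A (Matrix.single j i 1))
      = (k : ℝ) * (A ^ (k - 1)) i j := by
  rw [powDeriv_apply, Matrix.trace_sum]
  have h : ∀ s ∈ Finset.range k,
      Matrix.trace (A ^ s * Matrix.single j i 1 * A ^ (k - 1 - s))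
        = (A ^ (k - 1)) i j := by
    intro s hs
    rw [Finset.mem_range] at hs
    rw [Matrix.trace_mul_cycle, ← pow_add]
    have : k - 1 - s + s = k - 1 := by omega
    rw [this, trace_mul_std]
  rw [Finset.sum_congr rfl h, Finset.sum_const, Finset.card_range, nsmul_eq_mul]

lemma hasFDerivAt_Ifun (k : ℕ) (A B : Mat n) :
    HasFDerivAt (fun p : Mat n × Mat n => (1 / (k : ℝ)) * Matrix.trace (p.1 ^ k))
      ((1 / (k : ℝ)) • ((traceCLM (n := n)).comp
        ((powDeriv k A).comp (ContinuousLinearMap.fst ℝ (Mat n) (Mat n))))) (A, B) := by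
  have h1 : HasFDerivAt (fun p : Mat n × Mat n => p.1 ^ k)
      ((powDeriv k A).comp (ContinuousLinearMap.fst ℝ (Mat n) (Mat n))) (A, B) :=
    (hasFDerivAt_matpow k A).comp (A, B) hasFDerivAt_fst
  have h2 := (traceCLM (n := n)).hasFDerivAt.comp (A, B) h1
  exact h2.const_mul _

lemma fderiv_Ifun_apply (k : ℕ) (A B V W : Mat n) :
    fderiv ℝ (fun p : Mat n × Mat n => (1 / (k : ℝ)) * Matrix.trace (p.1 ^ k)) (A, B) (V, W)
      = (1 / (k : ℝ)) * Matrix.trace (powDeriv k A V) := by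
  rw [(hasFDerivAt_Ifun k A B).fderiv]
  rfl

lemma hasFDerivAt_Jfun (m : ℕ) (A B : Mat n) :
    HasFDerivAt (fun p : Mat n × Mat n => Matrix.trace (p.1 ^ m * p.2))
      ((traceCLM (n := n)).comp
        ((A ^ m) • (ContinuousLinearMap.snd ℝ (Mat n) (Mat n)) +
          ((powDeriv m A).comp (ContinuousLinearMap.fst ℝ (Mat n) (Mat n))).smulRight B))
      (A, B) := by
  have h1 : HasFDerivAt (fun p : Mat n × Mat n => p.1 ^ m)
      ((powDeriv m A).comp (ContinuousLinearMap.fst ℝ (Mat n) (Mat n))) (A, B) :=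
    (hasFDerivAt_matpow m A).comp (A, B) hasFDerivAt_fst
  have h2 := h1.mul' (hasFDerivAt_snd (p := (A, B)) (E := Mat n) (F := Mat n))
  exact (traceCLM (n := n)).hasFDerivAt.comp (A, B) h2

lemma fderiv_Jfun_apply (m : ℕ) (A B V W : Mat n) :
    fderiv ℝ (fun p : Mat n × Mat n => Matrix.trace (p.1 ^ m * p.2)) (A, B) (V, W)
      = Matrix.trace (A ^ m * W + powDeriv m A V * B) := by
  rw [(hasFDerivAt_Jfun m A B).fderiv]
  simp [smul_eq_mul]

lemma gradA_Ifun (k : ℕ) (hk : 1 ≤ k) (A B : Mat n) :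
    gradA (Ifun n k) (A, B) = A ^ (k - 1) := by
  ext i j
  show fderiv ℝ (Ifun n k) (A, B) (Matrix.single j i 1, 0) = (A ^ (k - 1)) i j
  rw [show Ifun n k = (fun p : Mat n × Mat n => (1 / (k : ℝ)) * Matrix.trace (p.1 ^ k))
    from rfl, fderiv_Ifun_apply, trace_powDeriv_std]
  have hk' : (k : ℝ) ≠ 0 := by positivity
  field_simp

lemma gradB_Ifun (k : ℕ) (A B : Mat n) :
    gradB (Ifun n k) (A, B) = 0 := by
  ext i j
  show fderiv ℝ (Ifun n k) (A, B) (0, Matrix.single j i 1) = (0 : Mat n) i j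
  rw [show Ifun n k = (fun p : Mat n × Mat n => (1 / (k : ℝ)) * Matrix.trace (p.1 ^ k))
    from rfl, fderiv_Ifun_apply]
  simp

lemma gradB_Jfun (l : ℕ) (A B : Mat n) :
    gradB (Jfun n l) (A, B) = A ^ (l - 1) := by
  ext i j
  show fderiv ℝ (Jfun n l) (A, B) (0, Matrix.single j i 1) = (A ^ (l - 1)) i j
  rw [show Jfun n l = (fun p : Mat n × Mat n => Matrix.trace (p.1 ^ (l - 1) * p.2))
    from rfl, fderiv_Jfun_apply]
  rw [map_zero, zero_mul, add_zero, trace_mul_std]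

lemma gradA_Jfun_aux (m : ℕ) (A B : Mat n) (i j : Fin n) :
    Matrix.trace (powDeriv m A (Matrix.single j i 1) * B)
      = (∑ s ∈ Finset.range m, A ^ (m - 1 - s) * B * A ^ s) i j := by
  rw [powDeriv_apply, Finset.sum_mul, Matrix.trace_sum, Matrix.sum_apply]
  refine Finset.sum_congr rfl fun s hs => ?_
  rw [Matrix.trace_mul_cycle, Matrix.trace_mul_cycle, ← mul_assoc, trace_mul_std]

lemma gradA_Jfun (l : ℕ) (A B : Mat n) :
    gradA (Jfun n l) (A, B)
      = ∑ s ∈ Finset.range (l - 1), A ^ (l - 1 - 1 - s) * B * A ^ s := by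
  ext i j
  show fderiv ℝ (Jfun n l) (A, B) (Matrix.single j i 1, 0)
      = (∑ s ∈ Finset.range (l - 1), A ^ (l - 1 - 1 - s) * B * A ^ s) i j
  rw [show Jfun n l = (fun p : Mat n × Mat n => Matrix.trace (p.1 ^ (l - 1) * p.2))
    from rfl, fderiv_Jfun_apply, mul_zero, zero_add, gradA_Jfun_aux]

theorem IJ_bracket0_relations (n : ℕ) (hn : 1 ≤ n) (k l : ℕ)
    (hk : 1 ≤ k) (hl : 1 ≤ l) (A B : Mat n) :
    bracket0 (Ifun n k) (Ifun n l) (A, B) = 0 ∧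
    (3 ≤ k + l →
      bracket0 (Jfun n l) (Ifun n k) (A, B)
        = ((k : ℝ) + (l : ℝ) - 2) * Ifun n (k + l - 2) (A, B)) ∧
    bracket0 (Jfun n 1) (Ifun n 1) (A, B) = (n : ℝ) ∧
    (3 ≤ k + l →
      bracket0 (Jfun n k) (Jfun n l) (A, B)
        = ((l : ℝ) - (k : ℝ)) * Jfun n (k + l - 2) (A, B)) ∧
    bracket0 (Jfun n 1) (Jfun n 1) (A, B) = 0 := by
  refine ⟨?_, ?_, ?_, ?_, ?_⟩
  · simp only [bracket0, gradB_Ifun, zero_mul, mul_zero, sub_zero, zero_sub,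
      Matrix.trace_neg, Matrix.trace_zero, neg_zero]
  · intro h3
    simp only [bracket0, gradB_Jfun, gradA_Ifun k hk, gradB_Ifun, mul_zero, sub_zero,
      ← pow_add]
    rw [show l - 1 + (k - 1) = k + l - 2 by omega]
    show Matrix.trace (A ^ (k + l - 2))
        = ((k : ℝ) + (l : ℝ) - 2) * ((1 / ((k + l - 2 : ℕ) : ℝ)) * Matrix.trace (A ^ (k + l - 2)))
    rw [Nat.cast_sub (by omega : 2 ≤ k + l)]
    push_cast
    have hne : (k : ℝ) + (l : ℝ) - 2 ≠ 0 := by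
      have : (3 : ℝ) ≤ (k : ℝ) + (l : ℝ) := by exact_mod_cast h3
      linarith
    field_simp
  · simp only [bracket0, gradB_Jfun, gradA_Ifun 1 le_rfl, gradB_Ifun, mul_zero, sub_zero]
    simp [Matrix.trace_one]
  · intro h3
    simp only [bracket0, gradB_Jfun, gradA_Jfun, Matrix.trace_sub, Matrix.mul_sum,
      Finset.sum_mul, Matrix.trace_sum]
    have hterm1 : ∀ s ∈ Finset.range (l - 1),
        Matrix.trace (A ^ (k - 1) * (A ^ (l - 1 - 1 - s) * B * A ^ s))
          = Matrix.trace (A ^ (k + l - 3) * B) := by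
      intro s hs
      rw [Finset.mem_range] at hs
      rw [Matrix.trace_mul_comm, mul_assoc (A ^ (l - 1 - 1 - s) * B), ← pow_add,
        Matrix.trace_mul_comm, ← mul_assoc, ← pow_add,
        show s + (k - 1) + (l - 1 - 1 - s) = k + l - 3 by omega]
    have hterm2 : ∀ s ∈ Finset.range (k - 1),
        Matrix.trace (A ^ (k - 1 - 1 - s) * B * A ^ s * A ^ (l - 1))
          = Matrix.trace (A ^ (k + l - 3) * B) := by
      intro s hs
      rw [Finset.mem_range] at hs
      rw [mul_assoc (A ^ (k - 1 - 1 - s) * B), ← pow_add, Matrix.trace_mul_comm,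
        ← mul_assoc, ← pow_add,
        show s + (l - 1) + (k - 1 - 1 - s) = k + l - 3 by omega]
    rw [Finset.sum_congr rfl hterm1, Finset.sum_congr rfl hterm2, Finset.sum_const,
      Finset.sum_const, Finset.card_range, Finset.card_range, nsmul_eq_mul, nsmul_eq_mul]
    show _ = ((l : ℝ) - (k : ℝ)) * Matrix.trace (A ^ (k + l - 2 - 1) * B)
    rw [show k + l - 2 - 1 = k + l - 3 by omega, Nat.cast_sub hl, Nat.cast_sub hk]
    push_cast
    ring
  · simp only [bracket0, gradB_Jfun, gradA_Jfun]
    simp
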